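/- arXiv:2505.22211 — 4 statements merged into one kernel-verified Lean document; each statement's English description precedes it below -/
import Mathlib

section
/- Let μ, μ' ∈ (0,1) and φ > 0 be fixed, and let ε ∈ (0, 1/2). There exists a constant C > 0 (depending on φ and ε) such that for all μ, μ' ∈ [ε, 1−ε], the Kullback–Leibler divergence satisfies KL(Beta(μφ, (1−μ)φ), Beta(μ'φ, (1−μ')φ)) ≤ C (μ − μ')². -/
open Real MeasureTheory

/-- Density of the Beta(a,b) distribution on (0,1). -/
noncomputable def betaPdf (a b x : ℝ) : ℝ :=
  (Real.Gamma (a + b) / (Real.Gamma a * Real.Gamma b)) * x ^ (a - 1) * (1 - x) ^ (b - 1)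

/-- KL divergence between Beta distributions in the mean-precision parametrization,
`KL(Beta(μφ,(1-μ)φ), Beta(μ'φ,(1-μ')φ))`, written via densities. -/
noncomputable def klBeta (φ μ μ' : ℝ) : ℝ :=
  ∫ x in Set.Ioo (0:ℝ) 1,
    betaPdf (μ * φ) ((1 - μ) * φ) x *
      Real.log (betaPdf (μ * φ) ((1 - μ) * φ) x / betaPdf (μ' * φ) ((1 - μ') * φ) x)

section Aux

open Set Filter intervalIntegral

noncomputable def betaKernel (a b x : ℝ) : ℝ := x ^ (a - 1) * (1 - x) ^ (b - 1)

lemma integrableOn_betaKernel {a b : ℝ} (ha : 0 < a) (hb : 0 < b) :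
    IntegrableOn (betaKernel a b) (Ioo 0 1) := by
  have h := (Complex.betaIntegral_convergent (u := (a:ℂ)) (v := (b:ℂ)) (by simpa) (by simpa))
  have h2 : IntegrableOn (fun x : ℝ => (x:ℂ) ^ ((a:ℂ) - 1) * ((1:ℂ) - x) ^ ((b:ℂ) - 1))
      (Ioc 0 1) := by
    simpa [intervalIntegrable_iff, uIoc_of_le (zero_le_one' ℝ)] using h
  have h3 : IntegrableOn (fun x : ℝ => (x:ℂ) ^ ((a:ℂ) - 1) * ((1:ℂ) - x) ^ ((b:ℂ) - 1))
      (Ioo 0 1) := h2.mono_set Ioo_subset_Ioc_self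
  have h4 := h3.norm
  refine (h4.congr ?_)
  filter_upwards [ae_restrict_mem measurableSet_Ioo] with x hx
  have hx0 : (0:ℝ) < x := hx.1
  have hx1 : x < 1 := hx.2
  have e1 : (x:ℂ) ^ ((a:ℂ) - 1) = ((x ^ (a-1) : ℝ) : ℂ) := by
    rw [Complex.ofReal_cpow hx0.le]; push_cast; ring_nf
  have e2 : ((1:ℂ) - x) ^ ((b:ℂ) - 1) = (((1 - x) ^ (b-1) : ℝ) : ℂ) := by
    rw [Complex.ofReal_cpow (by linarith : (0:ℝ) ≤ 1 - x)]; push_cast; ring_nf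
  rw [e1, e2, ← Complex.ofReal_mul, Complex.norm_real, Real.norm_eq_abs, abs_of_nonneg]
  · rfl
  · exact mul_nonneg (Real.rpow_nonneg hx0.le _) (Real.rpow_nonneg (by linarith) _)

lemma setIntegral_betaKernel {a b : ℝ} (ha : 0 < a) (hb : 0 < b) :
    ∫ x in Ioo (0:ℝ) 1, betaKernel a b x
      = Real.Gamma a * Real.Gamma b / Real.Gamma (a + b) := by
  have hcb : Complex.Gamma a * Complex.Gamma b
      = Complex.Gamma (a + b) * Complex.betaIntegral a b :=
    Complex.Gamma_mul_Gamma_eq_betaIntegral (by simpa) (by simpa)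
  have hG : Real.Gamma (a + b) ≠ 0 := (Real.Gamma_pos_of_pos (by linarith)).ne'
  have key : Complex.betaIntegral a b = ((∫ x in Ioo (0:ℝ) 1, betaKernel a b x : ℝ) : ℂ) := by
    rw [Complex.betaIntegral]
    rw [show (∫ x in Ioo (0:ℝ) 1, betaKernel a b x)
        = ∫ x in (0:ℝ)..1, betaKernel a b x by
      rw [intervalIntegral.integral_of_le zero_le_one, integral_Ioc_eq_integral_Ioo]]
    rw [← intervalIntegral.integral_ofReal]
    refine intervalIntegral.integral_congr fun x hx => ?_
    rw [uIcc_of_le (zero_le_one' ℝ)] at hx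
    show (x:ℂ) ^ ((a:ℂ) - 1) * ((1:ℂ) - x) ^ ((b:ℂ) - 1) = ((betaKernel a b x : ℝ) : ℂ)
    unfold betaKernel
    rw [Complex.ofReal_mul, Complex.ofReal_cpow hx.1, Complex.ofReal_cpow (by linarith [hx.2])]
    push_cast
    ring_nf
  rw [key, ← Complex.ofReal_add a b, Complex.Gamma_ofReal, Complex.Gamma_ofReal,
    Complex.Gamma_ofReal, ← Complex.ofReal_mul, ← Complex.ofReal_mul] at hcb
  have := Complex.ofReal_injective hcb
  field_simp
  linarith [this]

lemma continuousOn_betaKernel (a b : ℝ) : ContinuousOn (betaKernel a b) (Ioo 0 1) := by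
  intro x hx
  apply ContinuousAt.continuousWithinAt
  apply ContinuousAt.mul
  · exact Real.continuousAt_rpow_const x _ (Or.inl hx.1.ne')
  · exact (Real.continuousAt_rpow_const (1-x) _ (Or.inl (by simp only [ne_eq, sub_eq_zero]; exact fun h => absurd h.symm hx.2.ne))).comp
      ((continuous_const.sub continuous_id).continuousAt)

lemma continuousOn_log_Ioo : ContinuousOn Real.log (Ioo (0:ℝ) 1) :=
  Real.continuousOn_log.mono (fun x hx => hx.1.ne')

lemma continuousOn_log_one_sub : ContinuousOn (fun x => Real.log (1 - x)) (Ioo (0:ℝ) 1) := by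
  intro x hx
  exact (Real.continuousAt_log (by have := hx.2; intro h; have := sub_eq_zero.mp h; linarith : (1:ℝ) - x ≠ 0)).comp
    ((continuous_const.sub continuous_id).continuousAt) |>.continuousWithinAt

lemma neg_log_le {x c : ℝ} (hx : 0 < x) (hc : 0 < c) : -Real.log x ≤ c⁻¹ * x ^ (-c) := by
  have h1 : Real.log (x ^ (-c)) ≤ x ^ (-c) - 1 :=
    Real.log_le_sub_one_of_pos (Real.rpow_pos_of_pos hx _)
  rw [Real.log_rpow hx] at h1
  have hx2 : (0:ℝ) < x ^ (-c) := Real.rpow_pos_of_pos hx _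
  have : -c * Real.log x ≤ x ^ (-c) := by linarith
  calc -Real.log x = c⁻¹ * (-c * Real.log x) := by field_simp
    _ ≤ c⁻¹ * x ^ (-c) := by
        exact mul_le_mul_of_nonneg_left this (by positivity)

lemma integrableOn_betaKernel_mul_log {a b : ℝ} (ha : 0 < a) (hb : 0 < b) :
    IntegrableOn (fun x => betaKernel a b x * Real.log x) (Ioo 0 1) := by
  have hbd := (integrableOn_betaKernel (half_pos ha) hb).const_mul (2/a)
  refine Integrable.mono' hbd ?_ ?_
  · exact ((continuousOn_betaKernel a b).mul continuousOn_log_Ioo).aestronglyMeasurable measurableSet_Ioo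
  · filter_upwards [ae_restrict_mem measurableSet_Ioo] with x hx
    have hx0 : (0:ℝ) < x := hx.1
    have hx1 : x < 1 := hx.2
    have hk : 0 ≤ betaKernel a b x :=
      mul_nonneg (Real.rpow_nonneg hx0.le _) (Real.rpow_nonneg (by linarith) _)
    have hlog : |Real.log x| = -Real.log x := by
      rw [abs_of_nonpos (Real.log_nonpos hx0.le hx1.le)]
    rw [Real.norm_eq_abs, abs_mul, hlog, abs_of_nonneg hk]
    have h1 : -Real.log x ≤ (a/2)⁻¹ * x ^ (-(a/2)) := neg_log_le hx0 (half_pos ha)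
    have key : betaKernel a b x * ((a/2)⁻¹ * x ^ (-(a/2))) = 2/a * betaKernel (a/2) b x := by
      unfold betaKernel
      rw [show a/2 - 1 = (a - 1) + (-(a/2)) by ring, Real.rpow_add hx0]
      field_simp
    calc betaKernel a b x * -Real.log x ≤ betaKernel a b x * ((a/2)⁻¹ * x ^ (-(a/2))) :=
          mul_le_mul_of_nonneg_left h1 hk
      _ = 2/a * betaKernel (a/2) b x := key

lemma integrableOn_betaKernel_mul_log_one_sub {a b : ℝ} (ha : 0 < a) (hb : 0 < b) :
    IntegrableOn (fun x => betaKernel a b x * Real.log (1 - x)) (Ioo 0 1) := by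
  have hbd := (integrableOn_betaKernel ha (half_pos hb)).const_mul (2/b)
  refine Integrable.mono' hbd ?_ ?_
  · exact ((continuousOn_betaKernel a b).mul continuousOn_log_one_sub).aestronglyMeasurable measurableSet_Ioo
  · filter_upwards [ae_restrict_mem measurableSet_Ioo] with x hx
    have hx0 : (0:ℝ) < x := hx.1
    have hx1 : (0:ℝ) < 1 - x := by linarith [hx.2]
    have hk : 0 ≤ betaKernel a b x :=
      mul_nonneg (Real.rpow_nonneg hx0.le _) (Real.rpow_nonneg hx1.le _)
    have hlog : |Real.log (1-x)| = -Real.log (1-x) := by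
      rw [abs_of_nonpos (Real.log_nonpos hx1.le (by linarith))]
    rw [Real.norm_eq_abs, abs_mul, hlog, abs_of_nonneg hk]
    have h1 : -Real.log (1-x) ≤ (b/2)⁻¹ * (1-x) ^ (-(b/2)) := neg_log_le hx1 (half_pos hb)
    have key : betaKernel a b x * ((b/2)⁻¹ * (1-x) ^ (-(b/2))) = 2/b * betaKernel a (b/2) x := by
      unfold betaKernel
      rw [show b/2 - 1 = (b - 1) + (-(b/2)) by ring, Real.rpow_add hx1]
      field_simp
    calc betaKernel a b x * -Real.log (1-x) ≤ betaKernel a b x * ((b/2)⁻¹ * (1-x) ^ (-(b/2))) :=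
          mul_le_mul_of_nonneg_left h1 hk
      _ = 2/b * betaKernel a (b/2) x := key

lemma betaPdf_eq (a b x : ℝ) :
    betaPdf a b x = (Real.Gamma (a + b) / (Real.Gamma a * Real.Gamma b)) * betaKernel a b x := by
  unfold betaPdf betaKernel; ring

lemma betaPdf_pos {a b x : ℝ} (ha : 0 < a) (hb : 0 < b) (hx : x ∈ Ioo (0:ℝ) 1) :
    0 < betaPdf a b x := by
  have h1 := Real.Gamma_pos_of_pos ha
  have h2 := Real.Gamma_pos_of_pos hb
  have h3 := Real.Gamma_pos_of_pos (by linarith : 0 < a + b)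
  have h4 : (0:ℝ) < x ^ (a-1) := Real.rpow_pos_of_pos hx.1 _
  have h5 : (0:ℝ) < (1-x) ^ (b-1) := Real.rpow_pos_of_pos (by linarith [hx.2]) _
  unfold betaPdf
  positivity

lemma integrableOn_betaPdf {a b : ℝ} (ha : 0 < a) (hb : 0 < b) :
    IntegrableOn (betaPdf a b) (Ioo 0 1) := by
  have h : IntegrableOn (fun x => (Real.Gamma (a + b) / (Real.Gamma a * Real.Gamma b))
      * betaKernel a b x) (Ioo 0 1) := (integrableOn_betaKernel ha hb).const_mul _
  exact IntegrableOn.congr_fun h (fun x _ => (betaPdf_eq a b x).symm) measurableSet_Ioo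

lemma integrableOn_betaPdf_mul_log {a b : ℝ} (ha : 0 < a) (hb : 0 < b) :
    IntegrableOn (fun x => betaPdf a b x * Real.log x) (Ioo 0 1) := by
  have h : IntegrableOn (fun x => (Real.Gamma (a + b) / (Real.Gamma a * Real.Gamma b))
      * (betaKernel a b x * Real.log x)) (Ioo 0 1) :=
    (integrableOn_betaKernel_mul_log ha hb).const_mul _
  refine IntegrableOn.congr_fun h (fun x _ => ?_) measurableSet_Ioo
  rw [betaPdf_eq]; ring

lemma integrableOn_betaPdf_mul_log_one_sub {a b : ℝ} (ha : 0 < a) (hb : 0 < b) :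
    IntegrableOn (fun x => betaPdf a b x * Real.log (1 - x)) (Ioo 0 1) := by
  have h : IntegrableOn (fun x => (Real.Gamma (a + b) / (Real.Gamma a * Real.Gamma b))
      * (betaKernel a b x * Real.log (1 - x))) (Ioo 0 1) :=
    (integrableOn_betaKernel_mul_log_one_sub ha hb).const_mul _
  refine IntegrableOn.congr_fun h (fun x _ => ?_) measurableSet_Ioo
  rw [betaPdf_eq]; ring

lemma setIntegral_betaPdf {a b : ℝ} (ha : 0 < a) (hb : 0 < b) :
    ∫ x in Ioo (0:ℝ) 1, betaPdf a b x = 1 := by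
  rw [show (fun x => betaPdf a b x)
      = fun x => (Real.Gamma (a + b) / (Real.Gamma a * Real.Gamma b)) * betaKernel a b x from
    funext (betaPdf_eq a b)]
  rw [MeasureTheory.integral_const_mul, setIntegral_betaKernel ha hb]
  have h1 := (Real.Gamma_pos_of_pos ha).ne'
  have h2 := (Real.Gamma_pos_of_pos hb).ne'
  have h3 := (Real.Gamma_pos_of_pos (by linarith : 0 < a + b)).ne'
  field_simp

/-- The log-normalizer `g`. -/
noncomputable def gfun (φ t : ℝ) : ℝ :=
  Real.log (Real.Gamma (t * φ)) + Real.log (Real.Gamma ((1 - t) * φ))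

/-- The (sub)gradient term `c`. -/
noncomputable def cfun (φ μ : ℝ) : ℝ :=
  φ * ((∫ x in Ioo (0:ℝ) 1, betaPdf (μ*φ) ((1-μ)*φ) x * Real.log x)
    - ∫ x in Ioo (0:ℝ) 1, betaPdf (μ*φ) ((1-μ)*φ) x * Real.log (1-x))

lemma log_betaPdf {φ μ x : ℝ} (hφ : 0 < φ) (hμ : μ ∈ Ioo (0:ℝ) 1) (hx : x ∈ Ioo (0:ℝ) 1) :
    Real.log (betaPdf (μ*φ) ((1-μ)*φ) x)
      = Real.log (Real.Gamma φ) - gfun φ μ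
        + (μ*φ - 1) * Real.log x + ((1-μ)*φ - 1) * Real.log (1-x) := by
  have ha : 0 < μ*φ := mul_pos hμ.1 hφ
  have hb : 0 < (1-μ)*φ := mul_pos (by linarith [hμ.2] : (0:ℝ) < 1 - μ) hφ
  have hab : μ*φ + (1-μ)*φ = φ := by ring
  have h1 := (Real.Gamma_pos_of_pos ha)
  have h2 := (Real.Gamma_pos_of_pos hb)
  have h3 := (Real.Gamma_pos_of_pos hφ)
  have hx0 : (0:ℝ) < x := hx.1
  have hx1 : (0:ℝ) < 1 - x := by linarith [hx.2]
  unfold betaPdf gfun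
  rw [hab, Real.log_mul (by positivity) (Real.rpow_pos_of_pos hx1 _).ne',
    Real.log_mul (by positivity) (Real.rpow_pos_of_pos hx0 _).ne',
    Real.log_div h3.ne' (by positivity), Real.log_mul h1.ne' h2.ne',
    Real.log_rpow hx0, Real.log_rpow hx1]

lemma klBeta_integrand_eq {φ μ μ' x : ℝ} (hφ : 0 < φ) (hμ : μ ∈ Ioo (0:ℝ) 1)
    (hμ' : μ' ∈ Ioo (0:ℝ) 1) (hx : x ∈ Ioo (0:ℝ) 1) :
    betaPdf (μ*φ) ((1-μ)*φ) x *
        Real.log (betaPdf (μ*φ) ((1-μ)*φ) x / betaPdf (μ'*φ) ((1-μ')*φ) x)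
      = (gfun φ μ' - gfun φ μ) * betaPdf (μ*φ) ((1-μ)*φ) x
        + ((μ-μ')*φ) * (betaPdf (μ*φ) ((1-μ)*φ) x * Real.log x)
        + ((μ'-μ)*φ) * (betaPdf (μ*φ) ((1-μ)*φ) x * Real.log (1-x)) := by
  have hp : 0 < betaPdf (μ*φ) ((1-μ)*φ) x :=
    betaPdf_pos (mul_pos hμ.1 hφ) (mul_pos (by linarith [hμ.2] : (0:ℝ) < 1 - μ) hφ) hx
  have hq : 0 < betaPdf (μ'*φ) ((1-μ')*φ) x :=
    betaPdf_pos (mul_pos hμ'.1 hφ) (mul_pos (by linarith [hμ'.2] : (0:ℝ) < 1 - μ') hφ) hx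
  rw [Real.log_div hp.ne' hq.ne', log_betaPdf hφ hμ hx, log_betaPdf hφ hμ' hx]
  ring

lemma klBeta_decomp {φ μ μ' : ℝ} (hφ : 0 < φ) (hμ : μ ∈ Ioo (0:ℝ) 1)
    (hμ' : μ' ∈ Ioo (0:ℝ) 1) :
    klBeta φ μ μ' = gfun φ μ' - gfun φ μ + (μ - μ') * cfun φ μ := by
  have ha : 0 < μ*φ := mul_pos hμ.1 hφ
  have hb : 0 < (1-μ)*φ := mul_pos (by linarith [hμ.2] : (0:ℝ) < 1 - μ) hφ
  unfold klBeta
  rw [setIntegral_congr_fun measurableSet_Ioo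
    (fun x hx => klBeta_integrand_eq hφ hμ hμ' hx)]
  have hA : IntegrableOn (fun x => (gfun φ μ' - gfun φ μ) * betaPdf (μ*φ) ((1-μ)*φ) x)
      (Ioo 0 1) := (integrableOn_betaPdf ha hb).const_mul _
  have hB : IntegrableOn
      (fun x => ((μ-μ')*φ) * (betaPdf (μ*φ) ((1-μ)*φ) x * Real.log x)) (Ioo 0 1) :=
    (integrableOn_betaPdf_mul_log ha hb).const_mul _
  have hC : IntegrableOn
      (fun x => ((μ'-μ)*φ) * (betaPdf (μ*φ) ((1-μ)*φ) x * Real.log (1-x))) (Ioo 0 1) :=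
    (integrableOn_betaPdf_mul_log_one_sub ha hb).const_mul _
  have hAB : IntegrableOn (fun x => (gfun φ μ' - gfun φ μ) * betaPdf (μ*φ) ((1-μ)*φ) x
      + ((μ-μ')*φ) * (betaPdf (μ*φ) ((1-μ)*φ) x * Real.log x)) (Ioo 0 1) := hA.add hB
  rw [MeasureTheory.integral_add hAB hC, MeasureTheory.integral_add hA hB,
    MeasureTheory.integral_const_mul, MeasureTheory.integral_const_mul, MeasureTheory.integral_const_mul, setIntegral_betaPdf ha hb]
  unfold cfun
  ring

lemma klBeta_nonneg {φ μ ν : ℝ} (hφ : 0 < φ) (hμ : μ ∈ Ioo (0:ℝ) 1)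
    (hν : ν ∈ Ioo (0:ℝ) 1) : 0 ≤ klBeta φ μ ν := by
  have ha : 0 < μ*φ := mul_pos hμ.1 hφ
  have hb : 0 < (1-μ)*φ := mul_pos (by linarith [hμ.2] : (0:ℝ) < 1 - μ) hφ
  have ha' : 0 < ν*φ := mul_pos hν.1 hφ
  have hb' : 0 < (1-ν)*φ := mul_pos (by linarith [hν.2] : (0:ℝ) < 1 - ν) hφ
  unfold klBeta
  rw [setIntegral_congr_fun measurableSet_Ioo
    (fun x hx => klBeta_integrand_eq hφ hμ hν hx)]
  have hint : IntegrableOn (fun x =>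
      (gfun φ ν - gfun φ μ) * betaPdf (μ*φ) ((1-μ)*φ) x
        + ((μ-ν)*φ) * (betaPdf (μ*φ) ((1-μ)*φ) x * Real.log x)
        + ((ν-μ)*φ) * (betaPdf (μ*φ) ((1-μ)*φ) x * Real.log (1-x))) (Ioo 0 1) :=
    (((integrableOn_betaPdf ha hb).const_mul _).add
      ((integrableOn_betaPdf_mul_log ha hb).const_mul _)).add
      ((integrableOn_betaPdf_mul_log_one_sub ha hb).const_mul _)
  have hsub : IntegrableOn (fun x =>
      betaPdf (μ*φ) ((1-μ)*φ) x - betaPdf (ν*φ) ((1-ν)*φ) x) (Ioo 0 1) :=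
    (integrableOn_betaPdf ha hb).sub (integrableOn_betaPdf ha' hb')
  have hmono : ∀ x ∈ Ioo (0:ℝ) 1,
      betaPdf (μ*φ) ((1-μ)*φ) x - betaPdf (ν*φ) ((1-ν)*φ) x
        ≤ (gfun φ ν - gfun φ μ) * betaPdf (μ*φ) ((1-μ)*φ) x
          + ((μ-ν)*φ) * (betaPdf (μ*φ) ((1-μ)*φ) x * Real.log x)
          + ((ν-μ)*φ) * (betaPdf (μ*φ) ((1-μ)*φ) x * Real.log (1-x)) := by
    intro x hx
    rw [← klBeta_integrand_eq hφ hμ hν hx]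
    have hp := betaPdf_pos ha hb hx
    have hq := betaPdf_pos ha' hb' hx
    have hlog : Real.log (betaPdf (ν*φ) ((1-ν)*φ) x / betaPdf (μ*φ) ((1-μ)*φ) x)
        ≤ betaPdf (ν*φ) ((1-ν)*φ) x / betaPdf (μ*φ) ((1-μ)*φ) x - 1 :=
      Real.log_le_sub_one_of_pos (by positivity)
    rw [Real.log_div hq.ne' hp.ne'] at hlog
    rw [Real.log_div hp.ne' hq.ne']
    have key : 1 - betaPdf (ν*φ) ((1-ν)*φ) x / betaPdf (μ*φ) ((1-μ)*φ) x
        ≤ Real.log (betaPdf (μ*φ) ((1-μ)*φ) x) - Real.log (betaPdf (ν*φ) ((1-ν)*φ) x) := by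
      linarith
    have h2 := mul_le_mul_of_nonneg_left key hp.le
    calc betaPdf (μ*φ) ((1-μ)*φ) x - betaPdf (ν*φ) ((1-ν)*φ) x
        = betaPdf (μ*φ) ((1-μ)*φ) x *
            (1 - betaPdf (ν*φ) ((1-ν)*φ) x / betaPdf (μ*φ) ((1-μ)*φ) x) := by
          rw [mul_sub, mul_one, mul_div_assoc', mul_div_right_comm, div_self hp.ne', one_mul]
      _ ≤ betaPdf (μ*φ) ((1-μ)*φ) x *
            (Real.log (betaPdf (μ*φ) ((1-μ)*φ) x)
              - Real.log (betaPdf (ν*φ) ((1-ν)*φ) x)) := h2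
  have h0 : (0:ℝ) = ∫ x in Ioo (0:ℝ) 1,
      (betaPdf (μ*φ) ((1-μ)*φ) x - betaPdf (ν*φ) ((1-ν)*φ) x) := by
    rw [MeasureTheory.integral_sub (integrableOn_betaPdf ha hb) (integrableOn_betaPdf ha' hb'),
      setIntegral_betaPdf ha hb, setIntegral_betaPdf ha' hb']
    ring
  exact h0.le.trans (setIntegral_mono_on hsub hint measurableSet_Ioo hmono)

lemma analyticAt_realGamma {x : ℝ} (hx : 0 < x) : AnalyticAt ℝ Real.Gamma x := by
  have hopen : IsOpen {s : ℂ | 0 < s.re} := isOpen_lt continuous_const Complex.continuous_re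
  have hdiff : DifferentiableOn ℂ Complex.Gamma {s : ℂ | 0 < s.re} := by
    intro s hs
    refine (Complex.differentiableAt_Gamma s (fun m => ?_)).differentiableWithinAt
    intro h
    rw [h] at hs
    simp only [mem_setOf_eq, Complex.neg_re, Complex.natCast_re] at hs
    have : (0:ℝ) ≤ (m:ℝ) := Nat.cast_nonneg m
    linarith
  have h1 : AnalyticAt ℂ Complex.Gamma (x:ℂ) :=
    hdiff.analyticAt (hopen.mem_nhds (by simpa using hx))
  have h2 : AnalyticAt ℝ (fun t : ℝ => Complex.Gamma (t:ℂ)) x :=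
    h1.restrictScalars.comp (Complex.ofRealCLM.analyticAt x)
  have h3 : AnalyticAt ℝ (fun t : ℝ => (Complex.Gamma (t:ℂ)).re) x :=
    (Complex.reCLM.analyticAt _).comp h2
  refine h3.congr ?_
  filter_upwards with t
  rw [Complex.Gamma_ofReal]
  rfl



lemma contDiffAt_gfun {φ t : ℝ} (hφ : 0 < φ) (ht : t ∈ Ioo (0:ℝ) 1) :
    ContDiffAt ℝ 2 (gfun φ) t := by
  have ha : 0 < t * φ := mul_pos ht.1 hφ
  have hb : 0 < (1 - t) * φ := mul_pos (by linarith [ht.2] : (0:ℝ) < 1 - t) hφ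
  have hG1 : AnalyticAt ℝ Real.Gamma (t * φ) := analyticAt_realGamma ha
  have hG2 : AnalyticAt ℝ Real.Gamma ((1 - t) * φ) := analyticAt_realGamma hb
  have hl1 : AnalyticAt ℝ (fun s : ℝ => s * φ) t := (analyticAt_id).mul analyticAt_const
  have hl2 : AnalyticAt ℝ (fun s : ℝ => (1 - s) * φ) t :=
    ((analyticAt_const.sub analyticAt_id)).mul analyticAt_const
  have hc1 : ContDiffAt ℝ 2 (fun s : ℝ => Real.Gamma (s * φ)) t := (AnalyticAt.comp (g := Real.Gamma) (f := fun s : ℝ => s * φ) hG1 hl1).contDiffAt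
  have hc2 : ContDiffAt ℝ 2 (fun s : ℝ => Real.Gamma ((1 - s) * φ)) t := (AnalyticAt.comp (g := Real.Gamma) (f := fun s : ℝ => (1 - s) * φ) hG2 hl2).contDiffAt
  have hlog1 : ContDiffAt ℝ 2 (fun s : ℝ => Real.log (Real.Gamma (s * φ))) t :=
    (Real.contDiffAt_log.mpr (Real.Gamma_pos_of_pos ha).ne').comp (g := Real.log) t hc1
  have hlog2 : ContDiffAt ℝ 2 (fun s : ℝ => Real.log (Real.Gamma ((1 - s) * φ))) t :=
    (Real.contDiffAt_log.mpr (Real.Gamma_pos_of_pos hb).ne').comp (g := Real.log) t hc2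
  exact hlog1.add hlog2

lemma contDiffOn_gfun {φ : ℝ} (hφ : 0 < φ) : ContDiffOn ℝ 2 (gfun φ) (Ioo 0 1) :=
  fun t ht => (contDiffAt_gfun hφ ht).contDiffWithinAt

lemma hasDerivAt_gfun {φ t : ℝ} (hφ : 0 < φ) (ht : t ∈ Ioo (0:ℝ) 1) :
    HasDerivAt (gfun φ) (deriv (gfun φ) t) t :=
  ((contDiffAt_gfun hφ ht).differentiableAt (by norm_num)).hasDerivAt

lemma contDiffOn_deriv_gfun {φ : ℝ} (hφ : 0 < φ) :
    ContDiffOn ℝ 1 (deriv (gfun φ)) (Ioo 0 1) :=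
  (contDiffOn_gfun hφ).deriv_of_isOpen isOpen_Ioo (by norm_num)

lemma subgrad_eq {g : ℝ → ℝ} {μ d c : ℝ} (hμ : μ ∈ Ioo (0:ℝ) 1)
    (hd : HasDerivAt g d μ)
    (hsub : ∀ ν ∈ Ioo (0:ℝ) 1, g μ + c * (ν - μ) ≤ g ν) : c = d := by
  have hslope := hasDerivAt_iff_tendsto_slope.mp hd
  have hr : Tendsto (slope g μ) (nhdsWithin μ (Ioi μ)) (nhds d) :=
    hslope.mono_left (nhdsWithin_mono μ (fun x hx => ne_of_gt hx))
  have hl : Tendsto (slope g μ) (nhdsWithin μ (Iio μ)) (nhds d) :=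
    hslope.mono_left (nhdsWithin_mono μ (fun x hx => ne_of_lt hx))
  have h1 : c ≤ d := by
    refine ge_of_tendsto hr ?_
    filter_upwards [Ioo_mem_nhdsGT_of_mem (⟨le_refl μ, hμ.2⟩ : μ ∈ Ico μ 1)] with ν hν
    have hν01 : ν ∈ Ioo (0:ℝ) 1 := ⟨lt_trans hμ.1 hν.1, hν.2⟩
    have hs := hsub ν hν01
    rw [slope_def_field, le_div_iff₀ (by linarith [hν.1] : (0:ℝ) < ν - μ)]
    linarith
  have h2 : d ≤ c := by
    refine le_of_tendsto hl ?_
    filter_upwards [Ioo_mem_nhdsLT_of_mem (⟨hμ.1, le_refl μ⟩ : μ ∈ Ioc 0 μ)] with ν hν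
    have hν01 : ν ∈ Ioo (0:ℝ) 1 := ⟨hν.1, lt_trans hν.2 hμ.2⟩
    have hs := hsub ν hν01
    rw [slope_def_field, div_le_iff_of_neg (by linarith [hν.2] : ν - μ < 0)]
    linarith
  exact le_antisymm h1 h2

end Aux

/-- For means bounded away from 0 and 1, the KL divergence between Beta distributions
with fixed precision `φ` is bounded by a constant times the squared distance of the means. -/
theorem klBeta_le_sq (φ ε : ℝ) (hφ : 0 < φ) (hε : ε ∈ Set.Ioo (0:ℝ) (1/2)) :
    ∃ C > 0, ∀ μ μ' : ℝ, μ ∈ Set.Icc ε (1 - ε) → μ' ∈ Set.Icc ε (1 - ε) →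
      klBeta φ μ μ' ≤ C * (μ - μ') ^ 2 := by
  have hKsub : Set.Icc ε (1-ε) ⊆ Set.Ioo (0:ℝ) 1 := fun x hx =>
    ⟨lt_of_lt_of_le hε.1 hx.1, lt_of_le_of_lt hx.2 (by linarith [hε.1])⟩
  have hcont : ContinuousOn (deriv (deriv (gfun φ))) (Set.Ioo 0 1) :=
    (contDiffOn_deriv_gfun hφ).continuousOn_deriv_of_isOpen isOpen_Ioo (le_refl 1)
  obtain ⟨M, hM⟩ := (isCompact_Icc (a := ε) (b := 1-ε)).exists_bound_of_continuousOn
    (hcont.mono hKsub)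
  have hdiff : ∀ x ∈ Set.Icc ε (1-ε), DifferentiableAt ℝ (deriv (gfun φ)) x := fun x hx =>
    ((contDiffOn_deriv_gfun hφ x (hKsub hx)).contDiffAt
      ((isOpen_Ioo).mem_nhds (hKsub hx))).differentiableAt one_ne_zero
  have hM0 : 0 ≤ M := le_trans (norm_nonneg _) (hM ε ⟨le_refl ε, by linarith [hε.2]⟩)
  refine ⟨M + 1, by linarith, fun μ μ' hμK hμ'K => ?_⟩
  have hμ := hKsub hμK
  have hμ' := hKsub hμ'K
  have hc : ∀ ν ∈ Set.Ioo (0:ℝ) 1, cfun φ ν = deriv (gfun φ) ν := by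
    intro ν hν
    refine subgrad_eq hν (hasDerivAt_gfun hφ hν) (fun ρ hρ => ?_)
    have h0 := klBeta_nonneg hφ hν hρ
    rw [klBeta_decomp hφ hν hρ] at h0
    nlinarith [h0]
  have hdecomp := klBeta_decomp hφ hμ hμ'
  have hsub2 : gfun φ μ' + cfun φ μ' * (μ - μ') ≤ gfun φ μ := by
    have h0 := klBeta_nonneg hφ hμ' hμ
    rw [klBeta_decomp hφ hμ' hμ] at h0
    nlinarith [h0]
  have hlip : ‖deriv (gfun φ) μ - deriv (gfun φ) μ'‖ ≤ M * ‖μ - μ'‖ :=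
    Convex.norm_image_sub_le_of_norm_deriv_le hdiff hM (convex_Icc _ _) hμ'K hμK
  have hlip' : |deriv (gfun φ) μ - deriv (gfun φ) μ'| ≤ M * |μ - μ'| := by
    simpa [Real.norm_eq_abs] using hlip
  calc klBeta φ μ μ' = gfun φ μ' - gfun φ μ + (μ - μ') * cfun φ μ := hdecomp
    _ ≤ (μ - μ') * (cfun φ μ - cfun φ μ') := by nlinarith [hsub2]
    _ = (μ - μ') * (deriv (gfun φ) μ - deriv (gfun φ) μ') := by rw [hc μ hμ, hc μ' hμ']
    _ ≤ |(μ - μ') * (deriv (gfun φ) μ - deriv (gfun φ) μ')| := le_abs_self _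
    _ = |μ - μ'| * |deriv (gfun φ) μ - deriv (gfun φ) μ'| := abs_mul _ _
    _ ≤ |μ - μ'| * (M * |μ - μ'|) := mul_le_mul_of_nonneg_left hlip' (abs_nonneg _)
    _ = M * |μ - μ'| ^ 2 := by ring
    _ = M * (μ - μ') ^ 2 := by rw [sq_abs]
    _ ≤ (M + 1) * (μ - μ') ^ 2 := by nlinarith [sq_nonneg (μ - μ')]
end

section
/- Let φ > 0 and ε ∈ (0, 1/2) be fixed, and let α ∈ (0,1). There exists a constant c > 0 such that for all μ, μ' ∈ [ε, 1−ε], the α-Rényi divergence satisfies D_α(Beta(μφ,(1−μ)φ), Beta(μ'φ,(1−μ')φ)) ≥ c (μ − μ')². -/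
open Real MeasureTheory

/-- α-Rényi divergence `D_α(Beta(μφ,(1-μ)φ), Beta(μ'φ,(1-μ')φ))` written via densities. -/
noncomputable def renyiBeta (α φ μ μ' : ℝ) : ℝ :=
  (1 / (α - 1)) * Real.log (∫ x in Set.Ioo (0:ℝ) 1,
    (betaPdf (μ * φ) ((1 - μ) * φ) x) ^ α * (betaPdf (μ' * φ) ((1 - μ') * φ) x) ^ (1 - α))


lemma realBeta (A B : ℝ) (hA : 0 < A) (hB : 0 < B) :
    ∫ x in Set.Ioo (0:ℝ) 1, x ^ (A - 1) * (1 - x) ^ (B - 1)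
      = Real.Gamma A * Real.Gamma B / Real.Gamma (A + B) := by
  set I : ℝ := ∫ x in Set.Ioo (0:ℝ) 1, x ^ (A - 1) * (1 - x) ^ (B - 1) with hI
  have h := Complex.Gamma_mul_Gamma_eq_betaIntegral (s := A) (t := B) (by simpa) (by simpa)
  have hbeta : Complex.betaIntegral A B = (I : ℂ) := by
    rw [Complex.betaIntegral, intervalIntegral.integral_of_le (by norm_num : (0:ℝ) ≤ 1),
      MeasureTheory.integral_Ioc_eq_integral_Ioo, hI,
      show ((∫ x in Set.Ioo (0:ℝ) 1, x ^ (A - 1) * (1 - x) ^ (B - 1) : ℝ) : ℂ)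
        = ∫ x in Set.Ioo (0:ℝ) 1, ((x ^ (A - 1) * (1 - x) ^ (B - 1) : ℝ) : ℂ)
      from (integral_ofReal).symm]
    refine MeasureTheory.setIntegral_congr_fun measurableSet_Ioo (fun x hx => ?_)
    obtain ⟨hx0, hx1⟩ := hx
    rw [Complex.ofReal_mul, Complex.ofReal_cpow hx0.le, Complex.ofReal_cpow (by linarith)]
    push_cast
    ring
  rw [hbeta] at h
  have h' : Real.Gamma A * Real.Gamma B = Real.Gamma (A + B) * I := by
    have : ((Real.Gamma A * Real.Gamma B : ℝ) : ℂ) = ((Real.Gamma (A + B) * I : ℝ) : ℂ) := by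
      push_cast [← Complex.Gamma_ofReal]
      exact h
    exact_mod_cast this
  have hG : Real.Gamma (A + B) ≠ 0 := (Real.Gamma_pos_of_pos (by linarith)).ne'
  field_simp
  linarith [h']


-- convexity of q x = -log x - x^2/2 on Ioo 0 1
lemma convexOn_q : ConvexOn ℝ (Set.Ioo (0:ℝ) 1) (fun x => -Real.log x - x^2/2) := by
  have hD : Convex ℝ (Set.Ioo (0:ℝ) 1) := convex_Ioo 0 1
  have hint : interior (Set.Ioo (0:ℝ) 1) = Set.Ioo (0:ℝ) 1 := isOpen_Ioo.interior_eq
  refine convexOn_of_hasDerivWithinAt2_nonneg hD (f' := fun x => -x⁻¹ - x)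
    (f'' := fun x => (x^2)⁻¹ - 1) ?_ ?_ ?_ ?_
  · intro x hx
    exact ((Real.continuousAt_log hx.1.ne').neg.sub (by fun_prop)).continuousWithinAt
  · intro x hx
    rw [hint] at hx ⊢
    have h1 : HasDerivAt (fun x : ℝ => -Real.log x - x^2/2) (-x⁻¹ - x) x := by
      have := ((Real.hasDerivAt_log hx.1.ne').neg.sub ((hasDerivAt_pow 2 x).div_const 2))
      simp at this
      exact this
    exact h1.hasDerivWithinAt
  · intro x hx
    rw [hint] at hx ⊢
    have h2 : HasDerivAt (fun x : ℝ => -x⁻¹ - x) ((x^2)⁻¹ - 1) x := by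
      have := ((hasDerivAt_inv hx.1.ne').neg.sub (hasDerivAt_id x))
      simp at this
      exact this
    exact h2.hasDerivWithinAt
  · intro x hx
    rw [hint] at hx
    have hx2 : 0 < x^2 := pow_pos hx.1 2
    have : x^2 ≤ 1 := by nlinarith [hx.1.le, hx.2.le]
    have : (1:ℝ) ≤ (x^2)⁻¹ := by rw [le_inv_comm₀ one_pos hx2]; simpa
    linarith

noncomputable def lgf (φ m : ℝ) : ℝ :=
  Real.log (Real.Gamma (m * φ)) + Real.log (Real.Gamma ((1 - m) * φ))

lemma log_integral (φ α μ μ' : ℝ) (hφ : 0 < φ) (hα0 : 0 < α) (hα1 : α < 1)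
    (hμ : μ ∈ Set.Ioo (0:ℝ) 1) (hμ' : μ' ∈ Set.Ioo (0:ℝ) 1) :
    Real.log (∫ x in Set.Ioo (0:ℝ) 1,
      (betaPdf (μ * φ) ((1 - μ) * φ) x) ^ α * (betaPdf (μ' * φ) ((1 - μ') * φ) x) ^ (1 - α))
    = lgf φ (α * μ + (1 - α) * μ') - α * lgf φ μ - (1 - α) * lgf φ μ' := by
  obtain ⟨hμ0, hμ1⟩ := hμ
  obtain ⟨hμ'0, hμ'1⟩ := hμ'
  set m : ℝ := α * μ + (1 - α) * μ' with hm
  have hm0 : 0 < m := by nlinarith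
  have hm1 : m < 1 := by nlinarith
  set C : ℝ := Real.Gamma φ / (Real.Gamma (μ * φ) * Real.Gamma ((1 - μ) * φ)) with hC
  set C' : ℝ := Real.Gamma φ / (Real.Gamma (μ' * φ) * Real.Gamma ((1 - μ') * φ)) with hC'
  have hGφ : 0 < Real.Gamma φ := Real.Gamma_pos_of_pos hφ
  have hG1 : 0 < Real.Gamma (μ * φ) := Real.Gamma_pos_of_pos (by positivity)
  have hG2 : 0 < Real.Gamma ((1 - μ) * φ) := Real.Gamma_pos_of_pos (by nlinarith)
  have hG3 : 0 < Real.Gamma (μ' * φ) := Real.Gamma_pos_of_pos (by positivity)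
  have hG4 : 0 < Real.Gamma ((1 - μ') * φ) := Real.Gamma_pos_of_pos (by nlinarith)
  have hGm1 : 0 < Real.Gamma (m * φ) := Real.Gamma_pos_of_pos (by positivity)
  have hGm2 : 0 < Real.Gamma ((1 - m) * φ) := Real.Gamma_pos_of_pos (by nlinarith)
  have hCpos : 0 < C := by rw [hC]; positivity
  have hC'pos : 0 < C' := by rw [hC']; positivity
  have hint : (∫ x in Set.Ioo (0:ℝ) 1,
      (betaPdf (μ * φ) ((1 - μ) * φ) x) ^ α * (betaPdf (μ' * φ) ((1 - μ') * φ) x) ^ (1 - α))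
      = (C ^ α * C' ^ (1 - α)) *
        (Real.Gamma (m * φ) * Real.Gamma ((1 - m) * φ) / Real.Gamma φ) := by
    have hcong : ∀ x ∈ Set.Ioo (0:ℝ) 1,
        (betaPdf (μ * φ) ((1 - μ) * φ) x) ^ α * (betaPdf (μ' * φ) ((1 - μ') * φ) x) ^ (1 - α)
        = (C ^ α * C' ^ (1 - α)) * (x ^ (m * φ - 1) * (1 - x) ^ ((1 - m) * φ - 1)) := by
      intro x hx
      obtain ⟨hx0, hx1⟩ := hx
      have h1x : (0:ℝ) < 1 - x := by linarith
      unfold betaPdf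
      rw [show μ * φ + (1 - μ) * φ = φ by ring, show μ' * φ + (1 - μ') * φ = φ by ring]
      rw [← hC, ← hC']
      rw [Real.mul_rpow (by positivity) (by positivity),
          Real.mul_rpow (by positivity) (by positivity),
          Real.mul_rpow (by positivity) (by positivity),
          Real.mul_rpow (by positivity) (by positivity)]
      rw [← Real.rpow_mul hx0.le, ← Real.rpow_mul hx0.le,
          ← Real.rpow_mul h1x.le, ← Real.rpow_mul h1x.le]
      rw [show (C ^ α * x ^ ((μ * φ - 1) * α) * (1 - x) ^ (((1 - μ) * φ - 1) * α)) *
            (C' ^ (1 - α) * x ^ ((μ' * φ - 1) * (1 - α)) *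
              (1 - x) ^ (((1 - μ') * φ - 1) * (1 - α)))
          = (C ^ α * C' ^ (1 - α)) *
            ((x ^ ((μ * φ - 1) * α) * x ^ ((μ' * φ - 1) * (1 - α))) *
             ((1 - x) ^ (((1 - μ) * φ - 1) * α) * (1 - x) ^ (((1 - μ') * φ - 1) * (1 - α))))
        by ring]
      rw [← Real.rpow_add hx0, ← Real.rpow_add h1x]
      rw [show (μ * φ - 1) * α + (μ' * φ - 1) * (1 - α) = m * φ - 1 by rw [hm]; try ring,
          show ((1 - μ) * φ - 1) * α + ((1 - μ') * φ - 1) * (1 - α) = (1 - m) * φ - 1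
            by rw [hm]; try ring]
      try ring
    rw [MeasureTheory.setIntegral_congr_fun measurableSet_Ioo hcong,
        MeasureTheory.integral_const_mul]
    rw [realBeta (m * φ) ((1 - m) * φ) (by positivity) (by nlinarith)]
    rw [show m * φ + (1 - m) * φ = φ by ring]
  rw [hint]
  rw [Real.log_mul (by positivity) (by positivity),
      Real.log_mul (by positivity) (by positivity),
      Real.log_div (by positivity) (by positivity),
      Real.log_mul (by positivity) (by positivity),
      Real.log_rpow hCpos, Real.log_rpow hC'pos, hC, hC',
      Real.log_div (by positivity) (by positivity),
      Real.log_div (by positivity) (by positivity),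
      Real.log_mul (by positivity) (by positivity),
      Real.log_mul (by positivity) (by positivity)]
  unfold lgf
  ring


lemma lgf_decomp (φ m : ℝ) (hφ : 0 < φ) (hm0 : 0 < m) (hm1 : m < 1) :
    lgf φ m = (Real.log (Real.Gamma (m * φ + 1)) + Real.log (Real.Gamma ((1 - m) * φ + 1)))
      + (-Real.log m - m ^ 2 / 2) + (-Real.log (1 - m)) + m ^ 2 / 2 - 2 * Real.log φ := by
  have h1m : (0:ℝ) < 1 - m := by linarith
  have e1 : Real.Gamma (m * φ + 1) = (m * φ) * Real.Gamma (m * φ) :=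
    Real.Gamma_add_one (by positivity)
  have e2 : Real.Gamma ((1 - m) * φ + 1) = ((1 - m) * φ) * Real.Gamma ((1 - m) * φ) :=
    Real.Gamma_add_one (by positivity)
  have hG1 : 0 < Real.Gamma (m * φ) := Real.Gamma_pos_of_pos (by positivity)
  have hG2 : 0 < Real.Gamma ((1 - m) * φ) := Real.Gamma_pos_of_pos (by positivity)
  rw [lgf, e1, e2, Real.log_mul (by positivity) (by positivity),
      Real.log_mul (by positivity) (by positivity),
      Real.log_mul (by positivity) (by positivity),
      Real.log_mul (by positivity) (by positivity)]
  ring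

set_option maxHeartbeats 1000000 in
/-- For means in `[ε, 1-ε]`, the α-Rényi divergence between Beta distributions with fixed
precision `φ` is lower bounded by a constant times the squared distance of the means. -/
theorem renyiBeta_ge_sq (φ ε α : ℝ) (hφ : 0 < φ) (hε : ε ∈ Set.Ioo (0:ℝ) (1/2))
    (hα : α ∈ Set.Ioo (0:ℝ) 1) :
    ∃ c > 0, ∀ μ μ' : ℝ, μ ∈ Set.Icc ε (1 - ε) → μ' ∈ Set.Icc ε (1 - ε) →
      c * (μ - μ') ^ 2 ≤ renyiBeta α φ μ μ' := by
  obtain ⟨hε0, hεh⟩ := hε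
  obtain ⟨hα0, hα1⟩ := hα
  have h1α : (0:ℝ) < 1 - α := by linarith
  refine ⟨α / 2, by positivity, ?_⟩
  intro μ μ' hμ hμ'
  obtain ⟨hμl, hμr⟩ := hμ
  obtain ⟨hμ'l, hμ'r⟩ := hμ'
  have hμIoo : μ ∈ Set.Ioo (0:ℝ) 1 := ⟨by linarith, by linarith⟩
  have hμ'Ioo : μ' ∈ Set.Ioo (0:ℝ) 1 := ⟨by linarith, by linarith⟩
  set m : ℝ := α * μ + (1 - α) * μ' with hm
  have hm0 : 0 < m := by nlinarith [hμIoo.1, hμ'Ioo.1]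
  have hm1 : m < 1 := by nlinarith [hμIoo.2, hμ'Ioo.2]
  rw [renyiBeta, log_integral φ α μ μ' hφ hα0 hα1 hμIoo hμ'Ioo, ← hm]
  -- convexity facts
  have hG : Real.log (Real.Gamma (m * φ + 1)) + Real.log (Real.Gamma ((1 - m) * φ + 1))
      ≤ α * (Real.log (Real.Gamma (μ * φ + 1)) + Real.log (Real.Gamma ((1 - μ) * φ + 1)))
        + (1 - α) * (Real.log (Real.Gamma (μ' * φ + 1))
            + Real.log (Real.Gamma ((1 - μ') * φ + 1))) := by
    have c1 := Real.convexOn_log_Gamma.2 (x := μ * φ + 1) (y := μ' * φ + 1)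
      (Set.mem_Ioi.mpr (by nlinarith [hμIoo.1])) (Set.mem_Ioi.mpr (by nlinarith [hμ'Ioo.1]))
      hα0.le h1α.le (by ring)
    have c2 := Real.convexOn_log_Gamma.2 (x := (1 - μ) * φ + 1) (y := (1 - μ') * φ + 1)
      (Set.mem_Ioi.mpr (by nlinarith [hμIoo.2])) (Set.mem_Ioi.mpr (by nlinarith [hμ'Ioo.2]))
      hα0.le h1α.le (by ring)
    simp only [smul_eq_mul, Function.comp_apply] at c1 c2
    rw [show α * (μ * φ + 1) + (1 - α) * (μ' * φ + 1) = m * φ + 1 by rw [hm]; ring] at c1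
    rw [show α * ((1 - μ) * φ + 1) + (1 - α) * ((1 - μ') * φ + 1) = (1 - m) * φ + 1
      by rw [hm]; ring] at c2
    linarith
  have hQ : -Real.log m - m ^ 2 / 2
      ≤ α * (-Real.log μ - μ ^ 2 / 2) + (1 - α) * (-Real.log μ' - μ' ^ 2 / 2) := by
    have := convexOn_q.2 hμIoo hμ'Ioo hα0.le h1α.le (by ring)
    simpa [smul_eq_mul, ← hm] using this
  have hR : -Real.log (1 - m) ≤ α * (-Real.log (1 - μ)) + (1 - α) * (-Real.log (1 - μ')) := by
    have hconv : ConvexOn ℝ (Set.Ioi (0:ℝ)) (fun x : ℝ => -Real.log x) :=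
      strictConcaveOn_log_Ioi.concaveOn.neg
    have := hconv.2 (x := 1 - μ) (y := 1 - μ')
      (Set.mem_Ioi.mpr (by linarith)) (Set.mem_Ioi.mpr (by linarith))
      hα0.le h1α.le (by ring)
    simp only [smul_eq_mul] at this
    rw [show α * (1 - μ) + (1 - α) * (1 - μ') = 1 - m by rw [hm]; ring] at this
    exact this
  have d1 := lgf_decomp φ μ hφ hμIoo.1 hμIoo.2
  have d2 := lgf_decomp φ μ' hφ hμ'Ioo.1 hμ'Ioo.2
  have d3 := lgf_decomp φ m hφ hm0 hm1
  have key : α * lgf φ μ + (1 - α) * lgf φ μ' - lgf φ m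
      = (α * (Real.log (Real.Gamma (μ * φ + 1)) + Real.log (Real.Gamma ((1 - μ) * φ + 1)))
          + (1 - α) * (Real.log (Real.Gamma (μ' * φ + 1))
              + Real.log (Real.Gamma ((1 - μ') * φ + 1)))
          - (Real.log (Real.Gamma (m * φ + 1)) + Real.log (Real.Gamma ((1 - m) * φ + 1))))
        + (α * (-Real.log μ - μ ^ 2 / 2) + (1 - α) * (-Real.log μ' - μ' ^ 2 / 2)
            - (-Real.log m - m ^ 2 / 2))
        + (α * (-Real.log (1 - μ)) + (1 - α) * (-Real.log (1 - μ')) - (-Real.log (1 - m)))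
        + α * (1 - α) * (μ - μ') ^ 2 / 2 := by
    rw [d1, d2, d3, hm]
    ring
  have hgap : α * (1 - α) * (μ - μ') ^ 2 / 2 ≤ α * lgf φ μ + (1 - α) * lgf φ μ' - lgf φ m := by
    rw [key]; linarith
  have heq : 1 / (α - 1) * (lgf φ m - α * lgf φ μ - (1 - α) * lgf φ μ')
      = (α * lgf φ μ + (1 - α) * lgf φ μ' - lgf φ m) / (1 - α) := by
    have hne : α - 1 ≠ 0 := by linarith
    have hne' : (1:ℝ) - α ≠ 0 := by linarith
    field_simp
    ring
  rw [heq, le_div_iff₀ h1α]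
  nlinarith [hgap]
end

section
/- Let b ∈ ℝ and c > 0. Then for all ψ ∈ ℝ, (e^ψ)^a / (1 + e^ψ)^b = 2^{−b} e^{κψ} ∫_0^∞ e^{−ωψ²/2} p(ω) dω, where κ = a − b/2 and p is the density of the Pólya–Gamma distribution PG(b, 0). In particular, the function ψ ↦ (cosh(ψ/2))^{−b} is the Laplace transform (in ψ²/2) of a PG(b,0) random variable. -/
open MeasureTheory ProbabilityTheory Real Filter

lemma measurable_gammaPDF' (a r : ℝ) : Measurable (ProbabilityTheory.gammaPDF a r) :=
  (measurable_gammaPDFReal a r).ennreal_ofReal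

lemma gamma_laplace {b t : ℝ} (hb : 0 < b) (ht : 0 ≤ t) :
    ∫⁻ x, ENNReal.ofReal (Real.exp (-(t * x))) ∂(gammaMeasure b 1)
      = ENNReal.ofReal ((1 + t) ^ (-b)) := by
  have h1t : (0:ℝ) < 1 + t := by linarith
  rw [gammaMeasure, lintegral_withDensity_eq_lintegral_mul _ (measurable_gammaPDF' b 1)
    (by fun_prop)]
  have key : ∀ x : ℝ, gammaPDF b 1 x * ENNReal.ofReal (Real.exp (-(t * x)))
      = ENNReal.ofReal ((1 + t) ^ (-b)) * gammaPDF b (1 + t) x := by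
    intro x
    rcases lt_or_ge x 0 with hx | hx
    · rw [gammaPDF_of_neg hx, gammaPDF_of_neg hx, zero_mul, mul_zero]
    · rw [gammaPDF_of_nonneg hx, gammaPDF_of_nonneg hx,
        ← ENNReal.ofReal_mul (by positivity), ← ENNReal.ofReal_mul (by positivity)]
      congr 1
      have hpow : ((1:ℝ) + t) ^ (-b) * (1 + t) ^ b = 1 := by
        rw [← Real.rpow_add h1t]; simp
      rw [Real.one_rpow]
      field_simp
      rw [show x^(b-1) * ((1:ℝ)+t)^(-b) * (1+t)^b * Real.exp (-(x*(1+t)))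
          = ((1+t)^(-b)*(1+t)^b) * (x^(b-1) * Real.exp (-(x*(1+t)))) by ring, hpow, one_mul,
        show -(x*(1+t)) = -x + -(x*t) by ring, Real.exp_add]
      ring
  simp only [Pi.mul_apply]
  rw [lintegral_congr (fun x => key x),
    lintegral_const_mul _ (measurable_gammaPDF' b (1+t)),
    lintegral_gammaPDF_eq_one hb h1t, mul_one]

lemma exp_neg_integral {Ω : Type*} [MeasureSpace Ω] [IsProbabilityMeasure (ℙ : Measure Ω)]
    {b : ℝ} (hb : 0 < b) {X : Ω → ℝ} (hX : Measurable X)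
    (hd : Measure.map X ℙ = gammaMeasure b 1) {t : ℝ} (ht : 0 ≤ t) :
    ∫ ω, Real.exp (-(t * X ω)) ∂ℙ = (1 + t) ^ (-b) := by
  have h1t : (0:ℝ) < 1 + t := by linarith
  have : ∫ ω, Real.exp (-(t * X ω)) ∂ℙ = ∫ x, Real.exp (-(t * x)) ∂(Measure.map X ℙ) := by
    rw [integral_map hX.aemeasurable (by fun_prop : Measurable (fun x : ℝ => Real.exp (-(t * x)))).aestronglyMeasurable]
  rw [this, hd, integral_eq_lintegral_of_nonneg_ae (ae_of_all _ fun x => (Real.exp_pos _).le)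
    (by fun_prop : Measurable (fun x : ℝ => Real.exp (-(t * x)))).aestronglyMeasurable,
    gamma_laplace hb ht, ENNReal.toReal_ofReal (by positivity)]

lemma gamma_ae_nonneg {Ω : Type*} [MeasureSpace Ω] [IsProbabilityMeasure (ℙ : Measure Ω)]
    {b : ℝ} {X : Ω → ℝ} (hX : Measurable X)
    (hd : Measure.map X ℙ = gammaMeasure b 1) : ∀ᵐ ω ∂(ℙ : Measure Ω), 0 ≤ X ω := by
  have : (ℙ : Measure Ω) (X ⁻¹' Set.Iio 0) = 0 := by
    rw [← Measure.map_apply hX measurableSet_Iio, hd, gammaMeasure,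
      withDensity_apply _ measurableSet_Iio]
    rw [setLIntegral_congr_fun measurableSet_Iio
      (fun x (hx : x < 0) => gammaPDF_of_neg hx), lintegral_zero]
  filter_upwards [measure_eq_zero_iff_ae_notMem.mp this] with ω h
  simpa using h

lemma gamma_lintegral_id {b : ℝ} (hb : 0 < b) :
    ∫⁻ x, ENNReal.ofReal x ∂(gammaMeasure b 1) = ENNReal.ofReal b := by
  rw [gammaMeasure, lintegral_withDensity_eq_lintegral_mul _ (measurable_gammaPDF' b 1)
    (by fun_prop)]
  have key : ∀ x : ℝ, gammaPDF b 1 x * ENNReal.ofReal x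
      = ENNReal.ofReal b * gammaPDF (b + 1) 1 x := by
    intro x
    rcases lt_or_ge x 0 with hx | hx
    · rw [gammaPDF_of_neg hx, gammaPDF_of_neg hx, zero_mul, mul_zero]
    · rw [gammaPDF_of_nonneg hx, gammaPDF_of_nonneg hx,
        ← ENNReal.ofReal_mul (by positivity), ← ENNReal.ofReal_mul hb.le]
      congr 1
      rw [Real.one_rpow, Real.one_rpow, Real.Gamma_add_one hb.ne']
      rcases eq_or_lt_of_le hx with rfl | hx
      · rw [show b + 1 - 1 = b by ring]
        simp [Real.zero_rpow hb.ne']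
      · rw [show b + 1 - 1 = (b-1) + 1 by ring, Real.rpow_add hx, Real.rpow_one]
        field_simp
  simp only [Pi.mul_apply]
  rw [lintegral_congr (fun x => key x),
    lintegral_const_mul _ (measurable_gammaPDF' (b+1) 1),
    lintegral_gammaPDF_eq_one (by linarith) one_pos, mul_one]

lemma summable_inv_sq : Summable (fun k : ℕ => ((((k:ℝ)+1)-1/2)^2)⁻¹) := by
  have h : Summable (fun k : ℕ => 4 * (((k:ℝ)+1)^2)⁻¹) := by
    apply Summable.mul_left
    have := (summable_nat_add_iff 1).mpr
      (Real.summable_one_div_nat_pow.mpr (by norm_num : 1 < 2))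
    simpa [one_div] using this
  refine Summable.of_nonneg_of_le (fun k => by positivity) (fun k => ?_) h
  rw [show (4:ℝ) * (((k:ℝ)+1)^2)⁻¹ = ((((k:ℝ)+1)/2)^2)⁻¹ by field_simp; ring]
  refine inv_anti₀ (by positivity) (pow_le_pow_left₀ (by positivity) ?_ 2)
  push_cast; linarith

lemma ae_summable {Ω : Type*} [MeasureSpace Ω] [IsProbabilityMeasure (ℙ : Measure Ω)]
    {b : ℝ} (hb : 0 < b) {g : ℕ → Ω → ℝ} (hmeas : ∀ k, Measurable (g k))
    (hdist : ∀ k, Measure.map (g k) ℙ = gammaMeasure b 1) :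
    ∀ᵐ ω ∂(ℙ : Measure Ω), Summable (fun k => g k ω / (((k:ℝ)+1)-1/2)^2) := by
  set d : ℕ → ℝ := fun k => (((k:ℝ)+1)-1/2)^2 with hd
  have hdpos : ∀ k, 0 < d k := fun k =>
    pow_pos (by have := Nat.cast_nonneg (α := ℝ) k; linarith) 2
  have hint : ∀ k, ∫⁻ ω, ENNReal.ofReal (g k ω) ∂ℙ = ENNReal.ofReal b := by
    intro k
    rw [← lintegral_map (by fun_prop) (hmeas k), hdist k, gamma_lintegral_id hb]
  have htot : ∫⁻ ω, ∑' k, ENNReal.ofReal (g k ω / d k) ∂ℙ < ⊤ := by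
    rw [lintegral_tsum (fun k => ((hmeas k).div_const _).ennreal_ofReal.aemeasurable)]
    have : ∀ k, ∫⁻ ω, ENNReal.ofReal (g k ω / d k) ∂ℙ
        = ENNReal.ofReal b * ENNReal.ofReal (d k)⁻¹ := by
      intro k
      simp_rw [div_eq_mul_inv, ENNReal.ofReal_mul' (inv_nonneg.mpr (hdpos k).le)]
      rw [lintegral_mul_const _ ((hmeas k)).ennreal_ofReal, hint k]
    simp_rw [this]
    rw [ENNReal.tsum_mul_left]
    apply ENNReal.mul_lt_top (by simp)
    rw [← ENNReal.ofReal_tsum_of_nonneg (fun k => (inv_nonneg.mpr (hdpos k).le))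
      summable_inv_sq]
    simp
  have hae : ∀ᵐ ω ∂(ℙ : Measure Ω), (∑' k, ENNReal.ofReal (g k ω / d k)) < ⊤ :=
    ae_lt_top (Measurable.ennreal_tsum
      fun k => ((hmeas k).div_const _).ennreal_ofReal) htot.ne
  have hnn : ∀ᵐ ω ∂(ℙ : Measure Ω), ∀ k, 0 ≤ g k ω :=
    (ae_all_iff).mpr (fun k => gamma_ae_nonneg (hmeas k) (hdist k))
  filter_upwards [hae, hnn] with ω h1 h2
  have := ENNReal.summable_toReal h1.ne
  refine this.congr (fun k => ?_)
  rw [ENNReal.toReal_ofReal (div_nonneg (h2 k) (hdpos k).le)]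

lemma tendsto_sinh_prod (y : ℝ) (hy : y ≠ 0) :
    Tendsto (fun n : ℕ => ∏ j ∈ Finset.range n, (1 + y^2/((j:ℝ)+1)^2)) atTop
      (nhds (Real.sinh (π*y)/(π*y))) := by
  have hpy : (π * y : ℝ) ≠ 0 := mul_ne_zero Real.pi_ne_zero hy
  have hne : ((π*y : ℝ) : ℂ) * Complex.I ≠ 0 :=
    mul_ne_zero (by exact_mod_cast hpy) Complex.I_ne_zero
  have C := Complex.tendsto_euler_sin_prod ((y:ℂ)*Complex.I)
  rw [show (↑π * ((y:ℂ)*Complex.I)) = ((π*y:ℝ):ℂ)*Complex.I by push_cast; ring,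
    Complex.sin_mul_I, ← Complex.ofReal_sinh] at C
  have C2 := C.div_const (((π*y:ℝ):ℂ)*Complex.I)
  have heq : ∀ n : ℕ, ((((π*y:ℝ):ℂ)*Complex.I) *
        ∏ j ∈ Finset.range n, (1 - ((y:ℂ)*Complex.I)^2/((j:ℂ)+1)^2)) / (((π*y:ℝ):ℂ)*Complex.I)
      = (((∏ j ∈ Finset.range n, (1 + y^2/((j:ℝ)+1)^2) : ℝ)) : ℂ) := by
    intro n
    rw [mul_comm, mul_div_assoc, div_self hne, mul_one, Complex.ofReal_prod]
    refine Finset.prod_congr rfl (fun j _ => ?_)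
    push_cast
    rw [mul_pow, Complex.I_sq]
    ring
  simp_rw [heq] at C2
  rw [show ((Real.sinh (π*y) : ℂ) * Complex.I) / (((π*y:ℝ):ℂ)*Complex.I)
    = ((Real.sinh (π*y) / (π*y) : ℝ) : ℂ) by
      rw [mul_div_mul_right _ _ Complex.I_ne_zero, ← Complex.ofReal_div]] at C2
  have C3 := (Complex.continuous_re.tendsto _).comp C2
  have : (fun n : ℕ => (((∏ j ∈ Finset.range n, (1 + y^2/((j:ℝ)+1)^2) : ℝ)) : ℂ).re)
      = fun n : ℕ => ∏ j ∈ Finset.range n, (1 + y^2/((j:ℝ)+1)^2) := by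
    funext n; exact Complex.ofReal_re _
  rw [Function.comp_def] at C3
  rw [this] at C3
  simpa only [Complex.ofReal_re] using C3

lemma prod_range_two_mul (f : ℕ → ℝ) (n : ℕ) :
    ∏ j ∈ Finset.range (2*n), f j
      = (∏ k ∈ Finset.range n, f (2*k)) * ∏ k ∈ Finset.range n, f (2*k+1) := by
  induction n with
  | zero => simp
  | succ n ih =>
    simp only [Nat.mul_succ, Finset.prod_range_succ, ih]
    ring

lemma tendsto_cosh_prod (ψ : ℝ) :
    Tendsto (fun n : ℕ => ∏ k ∈ Finset.range n, (1 + ψ^2/(π^2*(2*(k:ℝ)+1)^2))) atTop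
      (nhds (Real.cosh (ψ/2))) := by
  rcases eq_or_ne ψ 0 with rfl | hψ
  · simpa using (tendsto_const_nhds : Tendsto (fun _ : ℕ => (1:ℝ)) atTop _)
  set y := ψ/(2*π) with hy_def
  have hy : y ≠ 0 := div_ne_zero hψ (by positivity)
  have h2y : (2:ℝ)*y ≠ 0 := mul_ne_zero two_ne_zero hy
  have hπy : π * y ≠ 0 := mul_ne_zero Real.pi_ne_zero hy
  have hsinh : Real.sinh (π*y) / (π*y) ≠ 0 :=
    div_ne_zero (by rwa [ne_eq, Real.sinh_eq_zero]) hπy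
  have A := tendsto_sinh_prod y hy
  have B := (tendsto_sinh_prod (2*y) h2y).comp
    (tendsto_id.const_mul_atTop' zero_lt_two : Tendsto (fun n : ℕ => 2*n) atTop atTop)
  have C := B.div A hsinh
  have hkey : ∀ n : ℕ, (∏ j ∈ Finset.range (2*n), (1 + (2*y)^2/((j:ℝ)+1)^2))
        / (∏ j ∈ Finset.range n, (1 + y^2/((j:ℝ)+1)^2))
      = ∏ k ∈ Finset.range n, (1 + ψ^2/(π^2*(2*(k:ℝ)+1)^2)) := by
    intro n
    rw [prod_range_two_mul (fun j => 1 + (2*y)^2/((j:ℝ)+1)^2) n]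
    have h1 : ∏ k ∈ Finset.range n, (1 + (2*y)^2/(((2*k:ℕ):ℝ)+1)^2)
        = ∏ k ∈ Finset.range n, (1 + ψ^2/(π^2*(2*(k:ℝ)+1)^2)) := by
      refine Finset.prod_congr rfl (fun k _ => ?_)
      have hπ : (π:ℝ) ≠ 0 := Real.pi_ne_zero
      have hc : (2*(k:ℝ)+1) ≠ 0 := by positivity
      push_cast
      rw [hy_def]
      field_simp
    have h2 : ∏ k ∈ Finset.range n, (1 + (2*y)^2/(((2*k+1:ℕ):ℝ)+1)^2)
        = ∏ j ∈ Finset.range n, (1 + y^2/((j:ℝ)+1)^2) := by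
      refine Finset.prod_congr rfl (fun k _ => ?_)
      have hc : ((k:ℝ)+1) ≠ 0 := by positivity
      push_cast
      field_simp
      ring
    rw [h1, h2, mul_div_assoc, div_self, mul_one]
    exact ne_of_gt (Finset.prod_pos (fun j _ => by positivity))
  have hlim : (Real.sinh (π*(2*y)) / (π*(2*y))) / (Real.sinh (π*y)/(π*y))
      = Real.cosh (ψ/2) := by
    have hs : Real.sinh (π*y) ≠ 0 := by rwa [ne_eq, Real.sinh_eq_zero]
    rw [show π*(2*y) = 2*(π*y) by ring, Real.sinh_two_mul]
    rw [show ψ/2 = π*y by rw [hy_def]; field_simp]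
    field_simp
  rw [← hlim]
  exact C.congr (fun n => hkey n)

/-- Pólya–Gamma augmentation identity (Polson, Scott & Windle). Let `g k`, `k ∈ ℕ`, be
i.i.d. `Gamma(b,1)` random variables and let
`W = (1/(2π²)) Σ_{k≥1} g_k/((k-1/2)²)` be a `PG(b,0)` random variable. Then for all
`a ∈ ℝ` and all `ψ ∈ ℝ`,
`(e^ψ)^a / (1+e^ψ)^b = 2^{-b} e^{κψ} E[exp(-W ψ²/2)]` with `κ = a - b/2`. -/
theorem polya_gamma_identity
    {Ω : Type*} [MeasureSpace Ω] [IsProbabilityMeasure (ℙ : Measure Ω)]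
    (b : ℝ) (hb : 0 < b) (g : ℕ → Ω → ℝ)
    (hmeas : ∀ k, Measurable (g k))
    (hiid : iIndepFun g ℙ)
    (hdist : ∀ k, Measure.map (g k) ℙ = gammaMeasure b 1)
    (W : Ω → ℝ)
    (hW : ∀ x, W x = (1 / (2 * Real.pi ^ 2)) *
      ∑' k : ℕ, g k x / (((k : ℝ) + 1) - 1/2) ^ 2)
    (a ψ : ℝ) :
    (Real.exp ψ) ^ a / (1 + Real.exp ψ) ^ b
      = 2 ^ (-b) * Real.exp ((a - b / 2) * ψ) *
          ∫ x, Real.exp (-(W x) * ψ ^ 2 / 2) ∂ℙ := by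
  have hE : ∫ x, Real.exp (-(W x) * ψ ^ 2 / 2) ∂ℙ = Real.cosh (ψ/2) ^ (-b) := by
    set t : ℕ → ℝ := fun k => ψ^2/(π^2*(2*(k:ℝ)+1)^2) with ht_def
    have ht_nonneg : ∀ k, 0 ≤ t k := fun k => by positivity
    set X : ℕ → Ω → ℝ := fun k ω => t k * g k ω with hX_def
    -- Step A: finite-dimensional expectations
    have hstepA : ∀ n : ℕ, ∫ ω, Real.exp (-(∑ k ∈ Finset.range n, X k ω)) ∂ℙ
        = ∏ k ∈ Finset.range n, (1 + t k) ^ (-b) := by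
      intro n
      have hXind : iIndepFun X ℙ :=
        hiid.comp (fun k x => t k * x) (fun k => measurable_const_mul _)
      have hXm : ∀ k, Measurable (X k) := fun k => (hmeas k).const_mul _
      have hsum := hXind.mgf_sum (t := -1) hXm (Finset.range n)
      calc ∫ ω, Real.exp (-(∑ k ∈ Finset.range n, X k ω)) ∂ℙ
          = mgf (∑ k ∈ Finset.range n, X k) ℙ (-1) := by
            rw [mgf]; congr 1; funext ω
            simp [neg_one_mul]
        _ = ∏ k ∈ Finset.range n, mgf (X k) ℙ (-1) := hsum
        _ = ∏ k ∈ Finset.range n, (1 + t k) ^ (-b) := by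
            refine Finset.prod_congr rfl fun k _ => ?_
            rw [mgf]
            have h := exp_neg_integral hb (hmeas k) (hdist k) (ht_nonneg k)
            rw [← h]
            congr 1; funext ω
            rw [hX_def]; ring_nf
    -- Step B: limit of the products
    have hB : Tendsto (fun n => ∏ k ∈ Finset.range n, (1 + t k) ^ (-b)) atTop
        (nhds (Real.cosh (ψ/2) ^ (-b))) := by
      have hcont : ContinuousAt (fun x : ℝ => x ^ (-b)) (Real.cosh (ψ/2)) :=
        Real.continuousAt_rpow_const _ _ (Or.inl (ne_of_gt (Real.cosh_pos _)))
      have h := hcont.tendsto.comp (tendsto_cosh_prod ψ)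
      refine h.congr fun n => ?_
      simp only [Function.comp_apply]
      rw [← Real.finset_prod_rpow _ _ (fun k _ => by positivity)]
    -- Step C: dominated convergence
    have hnn : ∀ᵐ ω ∂(ℙ : Measure Ω), ∀ k, 0 ≤ g k ω :=
      (ae_all_iff).mpr (fun k => gamma_ae_nonneg (hmeas k) (hdist k))
    have hsm := ae_summable hb hmeas hdist
    have hC : Tendsto (fun n => ∫ ω, Real.exp (-(∑ k ∈ Finset.range n, X k ω)) ∂ℙ) atTop
        (nhds (∫ x, Real.exp (-(W x) * ψ ^ 2 / 2) ∂ℙ)) := by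
      refine tendsto_integral_of_dominated_convergence (fun _ => (1:ℝ))
        (fun n => ?_) (integrable_const _) (fun n => ?_) ?_
      · exact ((Finset.measurable_sum _ (fun k _ =>
          (hmeas k).const_mul _)).neg.exp).aestronglyMeasurable
      · filter_upwards [hnn] with ω hg
        rw [Real.norm_eq_abs, abs_of_pos (Real.exp_pos _)]
        rw [Real.exp_le_one_iff, neg_nonpos]
        exact Finset.sum_nonneg fun k _ => mul_nonneg (ht_nonneg k) (hg k)
      · filter_upwards [hnn, hsm] with ω hg hs
        have hhas := ((hs.hasSum).mul_left (ψ^2/(4*π^2))).tendsto_sum_nat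
        have hco : ∀ k : ℕ, ψ^2/(4*π^2) / ((((k:ℝ)+1)-1/2)^2) = t k := by
          intro k
          rw [ht_def, div_div]
          congr 1
          ring
        have hterm : ∀ k : ℕ, ψ^2/(4*π^2) * (g k ω / (((k:ℝ)+1)-1/2)^2) = X k ω := by
          intro k
          show _ = t k * g k ω
          rw [← hco k]
          ring
        have hlimval : ψ^2/(4*π^2) * (∑' k, g k ω / (((k:ℝ)+1)-1/2)^2) = W ω * ψ^2/2 := by
          rw [hW ω]
          have hπ : (π:ℝ) ≠ 0 := Real.pi_ne_zero
          field_simp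
          ring
        simp_rw [hterm, hlimval] at hhas
        have hrw : -(W ω) * ψ^2/2 = -(W ω * ψ^2/2) := by ring
        rw [hrw]
        exact ((Real.continuous_exp.tendsto _).comp hhas.neg).congr (fun n => rfl)
    have := hC.congr (fun n => hstepA n)
    exact tendsto_nhds_unique this hB
  rw [hE]
  have hcosh := Real.cosh_pos (ψ/2)
  have h1 : (1:ℝ) + Real.exp ψ = 2 * Real.exp (ψ/2) * Real.cosh (ψ/2) := by
    rw [Real.cosh_eq]
    have e1 : Real.exp (ψ/2) * Real.exp (ψ/2) = Real.exp ψ := by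
      rw [← Real.exp_add]; ring_nf
    have e2 : Real.exp (ψ/2) * Real.exp (-(ψ/2)) = 1 := by
      rw [← Real.exp_add]; simp
    linear_combination -e1 - e2
  rw [h1, Real.mul_rpow (by positivity) hcosh.le,
    Real.mul_rpow (by positivity) (Real.exp_pos _).le,
    ← Real.exp_mul ψ a, ← Real.exp_mul (ψ/2) b,
    Real.rpow_neg (by norm_num : (0:ℝ) ≤ 2), Real.rpow_neg hcosh.le]
  have h2b : ((2:ℝ) ^ b) ≠ 0 := by positivity
  have hcb : (Real.cosh (ψ/2) ^ b) ≠ 0 := by positivity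
  have he : Real.exp ((a - b/2)*ψ) * Real.exp (ψ/2*b) = Real.exp (ψ*a) := by
    rw [← Real.exp_add]; ring_nf
  rw [← he]
  field_simp
end

section
/- A half-Cauchy random variable admits the scale-mixture representation: if λ² | ν ∼ Inv-Gamma(1/2, 1/ν) and ν ∼ Inv-Gamma(1/2, 1), then the marginal distribution of λ = √(λ²) is the standard half-Cauchy distribution Cau₊(0,1), i.e., has density 2/(π(1+λ²)) on (0,∞). -/
open Real MeasureTheory

open Set Filter in
lemma key_integral (c : ℝ) (hc : 0 < c) :
    ∫ ν in Set.Ioi (0:ℝ), Real.exp (-c / ν) / ν ^ 2 = 1 / c := by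
  set g : ℝ → ℝ := fun ν => if ν ≤ 0 then 0 else Real.exp (-c / ν) / c with hgdef
  have hg : ∀ ν ∈ Set.Ioi (0:ℝ),
      HasDerivAt g (Real.exp (-c / ν) / ν ^ 2) ν := by
    intro ν hν
    have hν0 : ν ≠ 0 := ne_of_gt hν
    have h1 : HasDerivAt (fun ν : ℝ => -c / ν) (c / ν ^ 2) ν := by
      have := (hasDerivAt_inv hν0).const_mul (-c)
      simpa [div_eq_mul_inv, neg_mul, mul_comm, mul_inv] using this
    have h2 := (h1.exp).div_const c
    have h3 : HasDerivAt (fun ν : ℝ => Real.exp (-c / ν) / c)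
        (Real.exp (-c / ν) / ν ^ 2) ν := by
      refine h2.congr_deriv ?_
      field_simp [hc.ne']
    apply h3.congr_of_eventuallyEq
    filter_upwards [eventually_gt_nhds hν] with x hx
    simp [hgdef, not_le.mpr hx]
  have hlim0 : Tendsto g (nhdsWithin 0 (Set.Ioi 0)) (nhds 0) := by
    have h1 : Tendsto (fun ν : ℝ => -c / ν) (nhdsWithin 0 (Set.Ioi 0)) atBot := by
      have := tendsto_inv_nhdsGT_zero.const_mul_atTop hc
      have h2 : Tendsto (fun ν : ℝ => c / ν) (nhdsWithin 0 (Set.Ioi 0)) atTop := by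
        simpa [div_eq_mul_inv] using this
      simpa [neg_div] using tendsto_neg_atBot_iff.mpr h2
    have := (Real.tendsto_exp_atBot).comp h1
    have h3 : Tendsto (fun ν : ℝ => Real.exp (-c / ν) / c) (nhdsWithin 0 (Set.Ioi 0))
        (nhds 0) := by simpa using this.div_const c
    apply h3.congr'
    filter_upwards [self_mem_nhdsWithin] with x hx
    simp [hgdef, not_le.mpr (Set.mem_Ioi.mp hx)]
  have hcont : ContinuousWithinAt g (Set.Ici 0) 0 := by
    have h0 : g 0 = 0 := by simp [hgdef]
    rw [ContinuousWithinAt, h0]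
    rw [show Set.Ici (0:ℝ) = insert 0 (Set.Ioi 0) by
      rw [Set.Ioi_insert]]
    rw [nhdsWithin_insert]
    rw [tendsto_sup]
    constructor
    · simpa [h0] using (tendsto_pure_nhds g 0)
    · exact hlim0
  have htop : Tendsto g atTop (nhds (1 / c)) := by
    have h1 : Tendsto (fun ν : ℝ => -c / ν) atTop (nhds 0) := by
      simpa using (tendsto_const_nhds.div_atTop (tendsto_id) : Tendsto (fun ν : ℝ => -c / ν) atTop (nhds 0))
    have := (Real.continuous_exp.tendsto 0).comp h1
    have h3 : Tendsto (fun ν : ℝ => Real.exp (-c / ν) / c) atTop (nhds (1/c)) := by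
      simpa using this.div_const c
    apply h3.congr'
    filter_upwards [eventually_gt_atTop 0] with x hx
    simp [hgdef, not_le.mpr hx]
  have h := integral_Ioi_of_hasDerivAt_of_nonneg hcont hg
    (fun x hx => by positivity) htop
  simpa [hgdef] using h



/-- Density of the inverse-gamma distribution `Inv-Gamma(a,b)` on `(0,∞)`. -/
noncomputable def invGammaPdf (a b x : ℝ) : ℝ :=
  (b ^ a / Real.Gamma a) * x ^ (-a - 1) * Real.exp (-b / x)

/-- Scale-mixture representation of the half-Cauchy distribution: if
`λ² | ν ~ Inv-Gamma(1/2, 1/ν)` and `ν ~ Inv-Gamma(1/2, 1)`, then `λ` is standard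
half-Cauchy, i.e. the marginal density of `λ` (including the Jacobian `2λ` from the
change of variables `λ² ↦ λ`) equals `2/(π(1+λ²))` on `(0,∞)`. -/
theorem halfCauchy_scale_mixture (l : ℝ) (hl : 0 < l) :
    2 * l * ∫ ν in Set.Ioi (0:ℝ),
        invGammaPdf (1/2) (1/ν) (l ^ 2) * invGammaPdf (1/2) 1 ν
      = 2 / (Real.pi * (1 + l ^ 2)) := by
  have hl0 : l ≠ 0 := ne_of_gt hl
  set c : ℝ := 1 / l ^ 2 + 1 with hcdef
  have hc : 0 < c := by positivity
  have hpt : ∀ ν ∈ Set.Ioi (0:ℝ),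
      invGammaPdf (1/2) (1/ν) (l ^ 2) * invGammaPdf (1/2) 1 ν
        = (1 / (Real.pi * l ^ 3)) * (Real.exp (-c / ν) / ν ^ 2) := by
    intro ν hν
    have hν0 : (0:ℝ) < ν := hν
    have hν0' : ν ≠ 0 := ne_of_gt hν0
    unfold invGammaPdf
    rw [Real.Gamma_one_half_eq, Real.one_rpow]
    have e1 : (1 / ν) ^ ((1:ℝ)/2) = (Real.sqrt ν)⁻¹ := by
      rw [← Real.sqrt_eq_rpow, one_div, Real.sqrt_inv]
    have e2 : ν ^ (-(1/2) - 1 : ℝ) = (Real.sqrt ν * ν)⁻¹ := by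
      rw [show (-(1/2) - 1 : ℝ) = -(1/2) + (-1) by ring, Real.rpow_add hν0,
        Real.rpow_neg_one, Real.rpow_neg hν0.le, ← Real.sqrt_eq_rpow, mul_inv]
    have e3 : (l ^ 2) ^ (-(1/2) - 1 : ℝ) = (l ^ 3)⁻¹ := by
      rw [← Real.rpow_natCast l 2, ← Real.rpow_mul hl.le]
      have h23 : ((2:ℕ):ℝ) * (-(1/2) - 1) = -(((3:ℕ):ℝ)) := by push_cast; ring
      rw [h23, Real.rpow_neg hl.le, Real.rpow_natCast]
    have e4 : Real.exp (-(1/ν) / l ^ 2) * Real.exp (-1 / ν) = Real.exp (-c / ν) := by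
      rw [← Real.exp_add]
      congr 1
      field_simp [hcdef]
      rw [hcdef]; field_simp; ring
    have hs : Real.sqrt Real.pi ≠ 0 := by positivity
    have hsν : Real.sqrt ν ≠ 0 := by positivity
    have sπ : Real.sqrt Real.pi * Real.sqrt Real.pi = Real.pi :=
      Real.mul_self_sqrt Real.pi_pos.le
    have sν : Real.sqrt ν * Real.sqrt ν = ν := Real.mul_self_sqrt hν0.le
    have hπ : Real.pi ≠ 0 := Real.pi_ne_zero
    have key : (Real.sqrt ν)⁻¹ * (Real.sqrt ν * ν)⁻¹ = (ν ^ 2)⁻¹ := by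
      rw [← mul_inv, show Real.sqrt ν * (Real.sqrt ν * ν) = ν ^ 2 by
        rw [← mul_assoc, sν]; ring]
    rw [e1, e2, e3]
    calc (Real.sqrt ν)⁻¹ / Real.sqrt Real.pi * (l ^ 3)⁻¹ *
          Real.exp (-(1 / ν) / l ^ 2) *
          (1 / Real.sqrt Real.pi * (Real.sqrt ν * ν)⁻¹ * Real.exp (-1 / ν))
        = (Real.sqrt Real.pi * Real.sqrt Real.pi)⁻¹ * (l ^ 3)⁻¹ *
          ((Real.sqrt ν)⁻¹ * (Real.sqrt ν * ν)⁻¹) *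
          (Real.exp (-(1 / ν) / l ^ 2) * Real.exp (-1 / ν)) := by ring
      _ = 1 / (Real.pi * l ^ 3) * (Real.exp (-c / ν) / ν ^ 2) := by
          rw [sπ, key, e4]; ring
  rw [setIntegral_congr_fun measurableSet_Ioi hpt, integral_const_mul,
    key_integral c hc]
  rw [hcdef]
  field_simp
end
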